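/- For every real number s that is not an integer multiple of π, the sum over all integers n of |sin(s)/(s - nπ)|² equals 1. (Partial fraction expansion identity: ∑_{n∈ℤ} 1/(s - nπ)² = 1/sin²(s).) -/

import Mathlib

open Real

-- bisection identity
lemma halve (x : ℝ) (hx : Real.sin x ≠ 0) :
    1 / Real.sin (x/2) ^ 2 + 1 / Real.sin ((x - π)/2) ^ 2 = 4 / Real.sin x ^ 2 := by
  have h1 : Real.sin x = 2 * Real.sin (x/2) * Real.cos (x/2) := by
    rw [show x = 2 * (x/2) by ring, Real.sin_two_mul]; ring_nf
  have h2 : Real.sin ((x - π)/2) = -Real.cos (x/2) := by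
    rw [show (x - π)/2 = x/2 - π/2 by ring, Real.sin_sub_pi_div_two]
  have hsn : Real.sin (x/2) ≠ 0 := fun h => hx (by rw [h1, h]; ring)
  have hcn : Real.cos (x/2) ≠ 0 := fun h => hx (by rw [h1, h]; ring)
  rw [h1, h2]
  have := Real.sin_sq_add_cos_sq (x/2)
  field_simp
  nlinarith [this]

lemma sin_ne (s : ℝ) (hs : ∀ n : ℤ, s ≠ n * π) (x : ℝ) (j : ℤ) (k : ℕ)
    (hx : x = (s - j * π) / 2 ^ k) : Real.sin x ≠ 0 := by
  intro h
  obtain ⟨m, hm⟩ := Real.sin_eq_zero_iff.mp h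
  apply hs (j + m * 2 ^ k)
  have h2 : (0:ℝ) < 2 ^ k := by positivity
  push_cast
  rw [hx] at hm
  field_simp at hm
  linarith [hm]

lemma iter (s : ℝ) (hs : ∀ n : ℤ, s ≠ n * π) (k : ℕ) :
    ∑ j ∈ Finset.range (2 ^ k), 1 / Real.sin ((s - j * π) / 2 ^ k) ^ 2
      = 4 ^ k / Real.sin s ^ 2 := by
  induction k with
  | zero => simp
  | succ k ih =>
    have key : ∀ j ∈ Finset.range (2 ^ k),
        1 / Real.sin ((s - j * π) / 2 ^ (k+1)) ^ 2
          + 1 / Real.sin ((s - (2 ^ k + j : ℕ) * π) / 2 ^ (k+1)) ^ 2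
        = 4 * (1 / Real.sin ((s - j * π) / 2 ^ k) ^ 2) := by
      intro j _
      have hx : Real.sin ((s - j * π) / 2 ^ k) ≠ 0 := sin_ne s hs _ j k (by push_cast; ring)
      have h := halve ((s - j * π) / 2 ^ k) hx
      have e1 : (s - j * π) / 2 ^ k / 2 = (s - j * π) / 2 ^ (k+1) := by ring
      have e2 : ((s - j * π) / 2 ^ k - π) / 2 = (s - (2 ^ k + j : ℕ) * π) / 2 ^ (k+1) := by
        push_cast; field_simp; ring
      rw [e1, e2] at h
      rw [h]; ring
    rw [pow_succ 2 k, show 2 ^ k * 2 = 2 ^ k + 2 ^ k from by ring, Finset.sum_range_add,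
      ← Finset.sum_add_distrib, Finset.sum_congr rfl key, ← Finset.mul_sum, ih]
    rw [pow_succ 4 k]; ring

lemma reindex (s : ℝ) (k : ℕ) :
    ∑ n ∈ Finset.Ico (1 - 2 ^ k : ℤ) (2 ^ k + 1), 1 / Real.sin ((s - n * π) / 2 ^ (k+1)) ^ 2
      = ∑ j ∈ Finset.range (2 ^ (k+1)), 1 / Real.sin ((s - j * π) / 2 ^ (k+1)) ^ 2 := by
  have hc1 : (((2:ℕ) ^ k : ℕ) : ℤ) = 2 ^ k := by norm_cast
  have hc2 : (((2:ℕ) ^ (k+1) : ℕ) : ℤ) = 2 ^ (k+1) := by norm_cast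
  apply Finset.sum_nbij' (i := fun (n : ℤ) => if 0 ≤ n then n.toNat else (n + 2 ^ (k+1)).toNat)
    (j := fun (j : ℕ) => if (j : ℤ) ≤ 2 ^ k then (j : ℤ) else (j : ℤ) - 2 ^ (k+1))
  · intro n hn
    simp only [Finset.mem_Ico] at hn
    simp only [Finset.mem_range]
    split_ifs <;> omega
  · intro j hj
    simp only [Finset.mem_range] at hj
    simp only [Finset.mem_Ico]
    split_ifs <;> omega
  · intro n hn
    simp only [Finset.mem_Ico] at hn
    split_ifs <;> omega
  · intro j hj
    simp only [Finset.mem_range] at hj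
    split_ifs <;> omega
  · intro n hn
    simp only [Finset.mem_Ico] at hn
    split_ifs with h1
    · have e : ((n.toNat : ℕ) : ℝ) = (n : ℝ) := by
        exact_mod_cast congrArg (Int.cast : ℤ → ℝ) (Int.toNat_of_nonneg h1)
      rw [e]
    · push_neg at h1
      have e : ((n + 2 ^ (k+1)).toNat : ℝ) = (n : ℝ) + 2 ^ (k+1) := by
        have h : ((n + 2 ^ (k+1)).toNat : ℤ) = n + 2 ^ (k+1) := by omega
        exact_mod_cast congrArg (Int.cast : ℤ → ℝ) h
      rw [e, show (s - ((n:ℝ) + 2 ^ (k+1)) * π) / 2 ^ (k+1)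
            = (s - n * π) / 2 ^ (k+1) - π from by field_simp; ring,
        Real.sin_sub_pi, neg_sq]

lemma pointwise_pos (u : ℝ) (h0 : 0 < u) (h2 : u ≤ π / 2) :
    |1 / u ^ 2 - 1 / Real.sin u ^ 2| ≤ 1 := by
  have hsp : 0 < Real.sin u :=
    Real.sin_pos_of_pos_of_lt_pi h0 (lt_of_le_of_lt h2 (by linarith [pi_pos]))
  have hle : Real.sin u ≤ u := Real.sin_le h0.le
  have hkey : u * Real.cos u ≤ Real.sin u := by
    rcases lt_or_eq_of_le h2 with h | h
    · have ht := Real.lt_tan h0 h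
      have hcp : 0 < Real.cos u := Real.cos_pos_of_mem_Ioo ⟨by linarith, h⟩
      rw [Real.tan_eq_sin_div_cos] at ht
      calc u * Real.cos u ≤ (Real.sin u / Real.cos u) * Real.cos u := by nlinarith
        _ = Real.sin u := by field_simp
    · rw [h, Real.cos_pi_div_two]; simpa using hsp.le
  have hcnn : 0 ≤ Real.cos u := Real.cos_nonneg_of_mem_Icc ⟨by linarith, h2⟩
  have hpoly : u ^ 2 ≤ Real.sin u ^ 2 * (1 + u ^ 2) := by
    nlinarith [Real.sin_sq_add_cos_sq u, hkey, mul_nonneg h0.le hcnn]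
  have hmono : 1 / u ^ 2 ≤ 1 / Real.sin u ^ 2 :=
    one_div_le_one_div_of_le (by positivity) (by nlinarith)
  have hup : 1 / Real.sin u ^ 2 ≤ 1 + 1 / u ^ 2 := by
    rw [div_le_iff₀ (by positivity)]
    have e : (1 + 1 / u ^ 2) * Real.sin u ^ 2 = Real.sin u ^ 2 * (1 + u ^ 2) / u ^ 2 := by
      field_simp; ring
    rw [e, le_div_iff₀ (by positivity)]
    linarith
  rw [abs_le]
  constructor <;> linarith

lemma pointwise (u : ℝ) (h0 : u ≠ 0) (h2 : |u| ≤ π / 2) :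
    |1 / u ^ 2 - 1 / Real.sin u ^ 2| ≤ 1 := by
  rcases h0.lt_or_gt with h | h
  · have := pointwise_pos (-u) (by linarith) (by rwa [abs_of_neg h] at h2)
    simpa [neg_sq] using this
  · exact pointwise_pos u h (by rwa [abs_of_pos h] at h2)

lemma key (s : ℝ) (hs0 : 0 < s) (hs1 : s < π) (hs : ∀ n : ℤ, s ≠ n * π) (k : ℕ) :
    |(∑ n ∈ Finset.Ico (1 - 2 ^ k : ℤ) (2 ^ k + 1), 1 / (s - n * π) ^ 2) - 1 / Real.sin s ^ 2|
      ≤ 2 / 2 ^ k := by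
  have hE : 1 / Real.sin s ^ 2
      = ∑ n ∈ Finset.Ico (1 - 2 ^ k : ℤ) (2 ^ k + 1),
          (1 / Real.sin ((s - n * π) / 2 ^ (k+1)) ^ 2) / 4 ^ (k+1) := by
    have hsne : Real.sin s ≠ 0 := (Real.sin_pos_of_pos_of_lt_pi hs0 hs1).ne'
    rw [← Finset.sum_div, reindex s k, iter s hs (k+1)]
    field_simp
  rw [hE, ← Finset.sum_sub_distrib]
  refine le_trans (Finset.abs_sum_le_sum_abs _ _) (le_trans
    (Finset.sum_le_sum (g := fun _ => (1:ℝ) / 4 ^ (k+1)) ?_) ?_)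
  · intro n hn
    simp only [Finset.mem_Ico] at hn
    set u : ℝ := (s - n * π) / 2 ^ (k+1) with hu
    have hpow : ((2:ℝ) ^ (k+1)) ^ 2 = 4 ^ (k+1) := by
      rw [show (4:ℝ) = 2 ^ 2 by norm_num, ← pow_mul, ← pow_mul, Nat.mul_comm]
    have h2p : (0:ℝ) < 2 ^ (k+1) := by positivity
    have hsn : s - n * π ≠ 0 := sub_ne_zero.mpr (hs n)
    have hu0 : u ≠ 0 := div_ne_zero hsn h2p.ne'
    have hck : ((2:ℝ) ^ k) * π ≤ 2 ^ (k+1) * (π / 2) := by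
      rw [pow_succ]; ring_nf; linarith [pi_pos]
    have hnl : (1 - 2 ^ k : ℝ) ≤ (n : ℝ) := by exact_mod_cast hn.1
    have hnu : (n : ℝ) ≤ 2 ^ k := by
      have : (n : ℤ) ≤ 2 ^ k := by omega
      exact_mod_cast this
    have habs : |u| ≤ π / 2 := by
      rw [hu, abs_div, abs_of_pos h2p, div_le_iff₀ h2p]
      rw [abs_le]
      constructor <;> nlinarith [pi_pos]
    have hrepr : 1 / (s - n * π) ^ 2 = (1 / u ^ 2) / 4 ^ (k+1) := by
      rw [hu, div_pow, ← hpow]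
      field_simp
    rw [hrepr, div_sub_div_same, abs_div, abs_of_pos (by positivity : (0:ℝ) < 4 ^ (k+1))]
    show |1 / u ^ 2 - 1 / Real.sin u ^ 2| / 4 ^ (k+1) ≤ 1 / 4 ^ (k+1)
    gcongr
    exact pointwise u hu0 habs
  · rw [Finset.sum_const, Int.card_Ico]
    have h1 : (((2:ℕ) ^ k : ℕ) : ℤ) = 2 ^ k := by norm_cast
    have h2 : (((2:ℕ) ^ (k+1) : ℕ) : ℤ) = 2 ^ (k+1) := by norm_cast
    have h3 : (2:ℤ) ^ (k+1) = 2 * 2 ^ k := by ring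
    have h4 : (2:ℕ) ^ (k+1) = 2 * 2 ^ k := by ring
    have hcard : ((2 ^ k + 1) - (1 - 2 ^ k) : ℤ).toNat = 2 ^ (k+1) := by omega
    rw [hcard, nsmul_eq_mul]
    push_cast
    have he : (2:ℝ) ^ (k+1) * (1 / 4 ^ (k+1)) = 1 / 2 ^ (k+1) := by
      rw [show (4:ℝ) = 2 * 2 by norm_num, mul_pow]
      field_simp
    rw [he, pow_succ, div_le_div_iff₀ (by positivity) (by positivity)]
    nlinarith [pow_pos (show (0:ℝ) < 2 by norm_num) k]

lemma core (s : ℝ) (hs0 : 0 < s) (hs1 : s < π) (hs : ∀ n : ℤ, s ≠ n * π) :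
    ∑' n : ℤ, |Real.sin s / (s - n * π)| ^ 2 = 1 := by
  have hsin : 0 < Real.sin s := Real.sin_pos_of_pos_of_lt_pi hs0 hs1
  set f : ℤ → ℝ := fun n => |Real.sin s / (s - n * π)| ^ 2 with hfdef
  have hf : ∀ n, f n = Real.sin s ^ 2 * (1 / (s - n * π) ^ 2) := by
    intro n
    rw [hfdef]
    simp only [sq_abs, div_pow]
    ring
  set W : ℕ → Finset ℤ := fun k => Finset.Ico (1 - 2 ^ k : ℤ) (2 ^ k + 1) with hWdef
  set A : ℕ → ℝ := fun k => ∑ n ∈ W k, 1 / (s - n * π) ^ 2 with hAdef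
  have hWsum : ∀ k, ∑ n ∈ W k, f n = Real.sin s ^ 2 * A k := by
    intro k
    rw [hAdef, Finset.mul_sum]
    exact Finset.sum_congr rfl fun n _ => hf n
  have hkey : ∀ k, |A k - 1 / Real.sin s ^ 2| ≤ 2 / 2 ^ k := fun k => key s hs0 hs1 hs k
  have hmem : ∀ (n : ℤ) (k : ℕ), n.natAbs ≤ k → n ∈ W k := by
    intro n k hk
    have h2 : k < 2 ^ k := Nat.lt_two_pow_self
    have hc : (((2:ℕ) ^ k : ℕ) : ℤ) = 2 ^ k := by norm_cast
    simp only [hWdef, Finset.mem_Ico]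
    omega
  have hnn : ∀ n, 0 ≤ f n := fun n => by rw [hf]; positivity
  have hsummable : Summable f := by
    apply summable_of_sum_le hnn
    intro u
    set k : ℕ := u.sup fun n => n.natAbs with hkd
    have hsub : u ⊆ W k := fun n hn => hmem n k (Finset.le_sup (f := fun n => n.natAbs) hn)
    calc ∑ n ∈ u, f n ≤ ∑ n ∈ W k, f n := Finset.sum_le_sum_of_subset_of_nonneg hsub
            (fun n _ _ => hnn n)
      _ = Real.sin s ^ 2 * A k := hWsum k
      _ ≤ Real.sin s ^ 2 * (1 / Real.sin s ^ 2 + 2) := by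
          have h1 : A k ≤ 1 / Real.sin s ^ 2 + 2 / 2 ^ k := by
            have := hkey k
            rw [abs_le] at this
            linarith [this.2]
          have h2 : (2:ℝ) / 2 ^ k ≤ 2 := by
            rw [div_le_iff₀ (by positivity)]
            nlinarith [one_le_pow₀ (show (1:ℝ) ≤ 2 by norm_num) (n := k)]
          nlinarith [sq_nonneg (Real.sin s)]
  have hmono : Monotone W := by
    intro a b hab
    apply Finset.Ico_subset_Ico
    · have := pow_le_pow_right₀ (show (1:ℤ) ≤ 2 by norm_num) hab
      omega
    · have := pow_le_pow_right₀ (show (1:ℤ) ≤ 2 by norm_num) hab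
      omega
  have hexh : ∀ n : ℤ, ∃ k, n ∈ W k := fun n => ⟨n.natAbs, hmem n n.natAbs le_rfl⟩
  have htend1 : Filter.Tendsto (fun k => ∑ n ∈ W k, f n) Filter.atTop (nhds (∑' n, f n)) :=
    hsummable.hasSum.comp (Filter.tendsto_atTop_finset_of_monotone hmono hexh)
  have hzero : Filter.Tendsto (fun k : ℕ => (2:ℝ) / 2 ^ k) Filter.atTop (nhds 0) := by
    have h := tendsto_pow_atTop_nhds_zero_of_lt_one (show (0:ℝ) ≤ 1/2 by norm_num)
      (show (1:ℝ)/2 < 1 by norm_num)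
    have := h.const_mul (2:ℝ)
    simpa [div_pow, div_eq_mul_inv, mul_comm] using this
  have hAt : Filter.Tendsto A Filter.atTop (nhds (1 / Real.sin s ^ 2)) := by
    have hdiff : Filter.Tendsto (fun k => A k - 1 / Real.sin s ^ 2) Filter.atTop (nhds 0) :=
      squeeze_zero_norm (fun k => by simpa using hkey k) hzero
    have := hdiff.add_const (1 / Real.sin s ^ 2)
    simpa using this
  have htend2 : Filter.Tendsto (fun k => ∑ n ∈ W k, f n) Filter.atTop (nhds 1) := by
    have h := hAt.const_mul (Real.sin s ^ 2)
    have he : Real.sin s ^ 2 * (1 / Real.sin s ^ 2) = 1 := by field_simp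
    rw [he] at h
    exact h.congr fun k => (hWsum k).symm
  exact tendsto_nhds_unique htend1 htend2

theorem tsum_sq_sin_div_sub_int_mul_pi (s : ℝ) (hs : ∀ n : ℤ, s ≠ n * π) :
    ∑' n : ℤ, |Real.sin s / (s - n * π)| ^ 2 = 1 := by
  set m : ℤ := ⌊s / π⌋ with hm
  set t : ℝ := s - m * π with ht
  have hpi : (0:ℝ) < π := pi_pos
  have ht0 : 0 ≤ t := by
    rw [ht]
    have h := (le_div_iff₀ hpi).mp (Int.floor_le (s / π))
    linarith
  have ht0' : 0 < t := lt_of_le_of_ne ht0 (fun h => hs m (by rw [ht] at h; linarith))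
  have ht1 : t < π := by
    rw [ht]
    have h := (div_lt_iff₀ hpi).mp (Int.lt_floor_add_one (s / π))
    linarith
  have hts : ∀ n : ℤ, t ≠ n * π := by
    intro n h
    apply hs (n + m)
    rw [ht] at h
    push_cast
    linarith
  have hsin2 : Real.sin s ^ 2 = Real.sin t ^ 2 := by
    have he : Real.sin s = Real.sin (t + m * π) := by rw [ht]; ring_nf
    have h1 : ((-1:ℝ) ^ m) ^ (2:ℕ) = 1 := by
      rw [sq, ← zpow_add₀ (by norm_num : (-1:ℝ) ≠ 0)]
      exact Even.neg_one_zpow ⟨m, rfl⟩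
    rw [he, Real.sin_add_int_mul_pi, mul_pow, h1, one_mul]
  have hstep : ∀ n : ℤ, |Real.sin s / (s - n * π)| ^ 2
      = (fun n : ℤ => |Real.sin t / (t - n * π)| ^ 2) (n - m) := by
    intro n
    simp only [sq_abs, div_pow, hsin2]
    congr 2
    push_cast
    rw [ht]
    ring
  rw [← core t ht0' ht1 hts,
    ← (Equiv.subRight m).tsum_eq (fun n : ℤ => |Real.sin t / (t - n * π)| ^ 2)]
  apply tsum_congr
  intro n
  simpa [Equiv.subRight_apply] using hstep n
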